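/- There exists ε₀ ∈ (0,1/4) such that for every ε ∈ (0,ε₀) the following holds. Let α ∈ (−1,1) be the root of 2εα² + α + 2ε = 0 of absolute value < 1, γ ∈ (−1,1) the root of εγ² + γ + ε = 0 of absolute value < 1, X := diag(α,0,γ), and V := (1,1,1) ∈ ℂ³. Then the 7×7 real matrix whose (j,s)-entry is Re( ∑_{r=0}^∞ (conj-transpose V) · (conj-transpose X)^r · A_j · A₁⁻¹ · A_s · X^r · V ) is invertible (each series converging absolutely). In other words, the codimension-7 quadric M ⊂ ℂ^{10} is 𝔇(a)-nondegenerate at 0 for a = (ε,ε,0,…,0), even though it is neither strongly pseudoconvex nor 𝔇-nondegenerate at 0. -/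

import Mathlib

open Matrix Complex
open scoped Matrix.Norms.L2Operator

noncomputable section

set_option maxRecDepth 8000
set_option maxHeartbeats 2000000

/-- The seven `3 × 3` Hermitian matrices defining the codimension-7 quadric `M ⊂ ℂ¹⁰`. -/
def quadricA : Fin 7 → Matrix (Fin 3) (Fin 3) ℂ
  | 0 => !![1, 0, 0; 0, 1, 0; 0, 0, -1]
  | 1 => !![1, 0, 0; 0, -1, 0; 0, 0, 0]
  | 2 => !![0, 0, 0; 0, 0, 1; 0, 1, 0]
  | 3 => !![0, 1, 0; 1, 0, 0; 0, 0, 0]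
  | 4 => !![0, 0, I; 0, 0, 0; -I, 0, 0]
  | 5 => !![0, 0, 0; 0, 0, I; 0, -I, 0]
  | 6 => !![0, I, 0; -I, 0, 0; 0, 0, 0]

section cvAux
variable {myt : Type*}
@[simp] lemma cv7_4 (a : myt) (u : Fin 6 → myt) : Matrix.vecCons a u 4 = u 3 := rfl
@[simp] lemma cv7_5 (a : myt) (u : Fin 6 → myt) : Matrix.vecCons a u 5 = u 4 := rfl
@[simp] lemma cv7_6 (a : myt) (u : Fin 6 → myt) : Matrix.vecCons a u 6 = u 5 := rfl
@[simp] lemma cv6_3 (a : myt) (u : Fin 5 → myt) : Matrix.vecCons a u 3 = u 2 := rfl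
@[simp] lemma cv6_4 (a : myt) (u : Fin 5 → myt) : Matrix.vecCons a u 4 = u 3 := rfl
@[simp] lemma cv6_5 (a : myt) (u : Fin 5 → myt) : Matrix.vecCons a u 5 = u 4 := rfl
@[simp] lemma cv5_2 (a : myt) (u : Fin 4 → myt) : Matrix.vecCons a u 2 = u 1 := rfl
@[simp] lemma cv5_3 (a : myt) (u : Fin 4 → myt) : Matrix.vecCons a u 3 = u 2 := rfl
@[simp] lemma cv5_4 (a : myt) (u : Fin 4 → myt) : Matrix.vecCons a u 4 = u 3 := rfl
@[simp] lemma cv4_1 (a : myt) (u : Fin 3 → myt) : Matrix.vecCons a u 1 = u 0 := rfl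
@[simp] lemma cv4_2 (a : myt) (u : Fin 3 → myt) : Matrix.vecCons a u 2 = u 1 := rfl
@[simp] lemma cv4_3 (a : myt) (u : Fin 3 → myt) : Matrix.vecCons a u 3 = u 2 := rfl
end cvAux

lemma invA0 : (quadricA 0)⁻¹ = quadricA 0 := by
  apply Matrix.inv_eq_right_inv
  ext i j
  fin_cases i <;> fin_cases j <;>
    simp [quadricA, Matrix.mul_apply, Fin.sum_univ_three, Matrix.one_apply,
      Matrix.vecHead, Matrix.vecTail]

lemma term_eq (α γ : ℝ) (j s : Fin 7) (r : ℕ) :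
    star (![1, 1, 1] : Fin 3 → ℂ) ⬝ᵥ
      ((((Matrix.diagonal ![(α : ℂ), 0, (γ : ℂ)])ᴴ) ^ r * quadricA j *
          (quadricA 0)⁻¹ * quadricA s *
          (Matrix.diagonal ![(α : ℂ), 0, (γ : ℂ)]) ^ r).mulVec
        (![1, 1, 1] : Fin 3 → ℂ))
    = ∑ p : Fin 3, ∑ q : Fin 3,
        (quadricA j * (quadricA 0)⁻¹ * quadricA s) p q *
          ((![(α : ℂ), 0, (γ : ℂ)] p * ![(α : ℂ), 0, (γ : ℂ)] q) ^ r) := by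
  have hXH : (Matrix.diagonal ![(α : ℂ), 0, (γ : ℂ)])ᴴ
      = Matrix.diagonal ![(α : ℂ), 0, (γ : ℂ)] := by
    have hstar : star (![(α : ℂ), 0, (γ : ℂ)]) = ![(α : ℂ), 0, (γ : ℂ)] := by
      funext i; fin_cases i <;> simp
    rw [Matrix.diagonal_conjTranspose, hstar]
  rw [hXH, Matrix.diagonal_pow]
  have hassoc : Matrix.diagonal (![(α : ℂ), 0, (γ : ℂ)] ^ r) * quadricA j *
      (quadricA 0)⁻¹ * quadricA s * Matrix.diagonal (![(α : ℂ), 0, (γ : ℂ)] ^ r)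
      = Matrix.diagonal (![(α : ℂ), 0, (γ : ℂ)] ^ r) *
        (quadricA j * (quadricA 0)⁻¹ * quadricA s) *
        Matrix.diagonal (![(α : ℂ), 0, (γ : ℂ)] ^ r) := by
    simp only [Matrix.mul_assoc]
  rw [hassoc]
  simp only [dotProduct, Matrix.mulVec, Matrix.diagonal_mul, Matrix.mul_diagonal,
    Pi.pow_apply, Pi.star_apply, dotProduct]
  refine Finset.sum_congr rfl fun p _ => ?_
  rw [Finset.mul_sum]
  refine Finset.sum_congr rfl fun q _ => ?_
  fin_cases p <;> fin_cases q <;> rcases r with _ | r <;> simp [mul_pow] <;> ring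

lemma dd_norm_lt (α γ : ℝ) (hα : |α| < 1) (hγ : |γ| < 1) (p q : Fin 3) :
    ‖![(α : ℂ), 0, (γ : ℂ)] p * ![(α : ℂ), 0, (γ : ℂ)] q‖ < 1 := by
  fin_cases p <;> fin_cases q <;>
    simp [norm_mul, Complex.norm_real] <;>
    nlinarith [abs_nonneg α, abs_nonneg γ, abs_mul_abs_self α, abs_mul_abs_self γ]

lemma summable_term (α γ : ℝ) (hα : |α| < 1) (hγ : |γ| < 1) (j s : Fin 7) :
    Summable (fun r : ℕ =>
      ‖star (![1, 1, 1] : Fin 3 → ℂ) ⬝ᵥ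
        ((((Matrix.diagonal ![(α : ℂ), 0, (γ : ℂ)])ᴴ) ^ r * quadricA j *
            (quadricA 0)⁻¹ * quadricA s *
            (Matrix.diagonal ![(α : ℂ), 0, (γ : ℂ)]) ^ r).mulVec
          (![1, 1, 1] : Fin 3 → ℂ))‖) := by
  have key : ∀ r : ℕ,
      ‖star (![1, 1, 1] : Fin 3 → ℂ) ⬝ᵥ
        ((((Matrix.diagonal ![(α : ℂ), 0, (γ : ℂ)])ᴴ) ^ r * quadricA j *
            (quadricA 0)⁻¹ * quadricA s *
            (Matrix.diagonal ![(α : ℂ), 0, (γ : ℂ)]) ^ r).mulVec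
          (![1, 1, 1] : Fin 3 → ℂ))‖
      ≤ ∑ p : Fin 3, ∑ q : Fin 3,
          ‖(quadricA j * (quadricA 0)⁻¹ * quadricA s) p q‖ *
            ‖![(α : ℂ), 0, (γ : ℂ)] p * ![(α : ℂ), 0, (γ : ℂ)] q‖ ^ r := by
    intro r
    rw [term_eq]
    refine (norm_sum_le _ _).trans (Finset.sum_le_sum fun p _ => ?_)
    refine (norm_sum_le _ _).trans (Finset.sum_le_sum fun q _ => ?_)
    rw [norm_mul, norm_pow]
  refine Summable.of_nonneg_of_le (fun r => norm_nonneg _) key ?_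
  refine summable_sum fun p _ => summable_sum fun q _ => ?_
  exact (summable_geometric_of_lt_one (norm_nonneg _) (dd_norm_lt α γ hα hγ p q)).mul_left _

lemma tsum_term (α γ : ℝ) (hα : |α| < 1) (hγ : |γ| < 1) (j s : Fin 7) :
    (∑' r : ℕ,
      star (![1, 1, 1] : Fin 3 → ℂ) ⬝ᵥ
        ((((Matrix.diagonal ![(α : ℂ), 0, (γ : ℂ)])ᴴ) ^ r * quadricA j *
            (quadricA 0)⁻¹ * quadricA s *
            (Matrix.diagonal ![(α : ℂ), 0, (γ : ℂ)]) ^ r).mulVec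
          (![1, 1, 1] : Fin 3 → ℂ)))
    = ∑ p : Fin 3, ∑ q : Fin 3,
        (quadricA j * (quadricA 0)⁻¹ * quadricA s) p q *
          (1 - ![(α : ℂ), 0, (γ : ℂ)] p * ![(α : ℂ), 0, (γ : ℂ)] q)⁻¹ := by
  rw [tsum_congr (term_eq α γ j s)]
  refine (Summable.tsum_finsetSum (fun p _ => summable_sum fun q _ =>
    ((summable_geometric_of_norm_lt_one (dd_norm_lt α γ hα hγ p q)).mul_left _))).trans ?_
  refine Finset.sum_congr rfl fun p _ => ?_
  refine (Summable.tsum_finsetSum (fun q _ =>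
    ((summable_geometric_of_norm_lt_one (dd_norm_lt α γ hα hγ p q)).mul_left _))).trans ?_
  refine Finset.sum_congr rfl fun q _ => ?_
  rw [tsum_mul_left, tsum_geometric_of_norm_lt_one (dd_norm_lt α γ hα hγ p q)]

lemma entries_eq (α γ : ℝ) (h1 : 1 - α*α ≠ 0) (h2 : 1 - α*γ ≠ 0) (h3 : 1 - γ*γ ≠ 0)
    (h1' : 1 - α^2 ≠ 0) (h3' : 1 - γ^2 ≠ 0) (h2' : 1 - γ*α ≠ 0) :
    ∀ j s : Fin 7, (∑ p : Fin 3, ∑ q : Fin 3,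
        (quadricA j * (quadricA 0)⁻¹ * quadricA s) p q *
          (1 - ![(α : ℂ), 0, (γ : ℂ)] p * ![(α : ℂ), 0, (γ : ℂ)] q)⁻¹).re
      = !![1+(α^2/(1-α^2))-(γ^2/(1-γ^2)), (α^2/(1-α^2)), 2, 2, 0, 0, 0;
        (α^2/(1-α^2)), 2+(α^2/(1-α^2)), -1, 0, 0, 0, 0;
        2, -1, (γ^2/(1-γ^2)), 1+(α*γ/(1-α*γ)), 0, 0, 0;
        2, 0, 1+(α*γ/(1-α*γ)), 2+(α^2/(1-α^2)), 0, 0, 0;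
        0, 0, 0, 0, (γ^2/(1-γ^2))-(α^2/(1-α^2)), -1, 1;
        0, 0, 0, 0, -1, (γ^2/(1-γ^2)), -1-(α*γ/(1-α*γ));
        0, 0, 0, 0, 1, -1-(α*γ/(1-α*γ)), 2+(α^2/(1-α^2))] j s := by
  have e1 : ((1 : ℂ) - (α:ℂ) * (α:ℂ))⁻¹ = (((1 - α*α)⁻¹ : ℝ) : ℂ) := by push_cast; ring
  have e2 : ((1 : ℂ) - (α:ℂ) * (γ:ℂ))⁻¹ = (((1 - α*γ)⁻¹ : ℝ) : ℂ) := by push_cast; ring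
  have e2' : ((1 : ℂ) - (γ:ℂ) * (α:ℂ))⁻¹ = (((1 - α*γ)⁻¹ : ℝ) : ℂ) := by rw [mul_comm]; exact e2
  have e3 : ((1 : ℂ) - (γ:ℂ) * (γ:ℂ))⁻¹ = (((1 - γ*γ)⁻¹ : ℝ) : ℂ) := by push_cast; ring
  have r1 : (((1 : ℂ) - (α:ℂ) * (α:ℂ))⁻¹).re = (1 - α*α)⁻¹ := by rw [e1]; exact Complex.ofReal_re _
  have i1 : (((1 : ℂ) - (α:ℂ) * (α:ℂ))⁻¹).im = 0 := by rw [e1]; exact Complex.ofReal_im _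
  have r2 : (((1 : ℂ) - (α:ℂ) * (γ:ℂ))⁻¹).re = (1 - α*γ)⁻¹ := by rw [e2]; exact Complex.ofReal_re _
  have i2 : (((1 : ℂ) - (α:ℂ) * (γ:ℂ))⁻¹).im = 0 := by rw [e2]; exact Complex.ofReal_im _
  have r2' : (((1 : ℂ) - (γ:ℂ) * (α:ℂ))⁻¹).re = (1 - α*γ)⁻¹ := by rw [e2']; exact Complex.ofReal_re _
  have i2' : (((1 : ℂ) - (γ:ℂ) * (α:ℂ))⁻¹).im = 0 := by rw [e2']; exact Complex.ofReal_im _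
  have r3 : (((1 : ℂ) - (γ:ℂ) * (γ:ℂ))⁻¹).re = (1 - γ*γ)⁻¹ := by rw [e3]; exact Complex.ofReal_re _
  have i3 : (((1 : ℂ) - (γ:ℂ) * (γ:ℂ))⁻¹).im = 0 := by rw [e3]; exact Complex.ofReal_im _
  intro j s
  fin_cases j <;> fin_cases s <;>
    · rw [invA0]
      simp [quadricA, Matrix.mul_apply, Fin.sum_univ_three, Matrix.vecHead, Matrix.vecTail,
        r1, i1, r2, i2, r2', i2', r3, i3, Complex.add_re, Complex.sub_re, Complex.neg_re,
        Complex.mul_re, Complex.ofReal_re, Complex.ofReal_im, Complex.mul_im]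
      try field_simp
      try ring

lemma det_block (A B C : ℝ) :
    (!![1+A-C, A, 2, 2, 0, 0, 0;
        A, 2+A, -1, 0, 0, 0, 0;
        2, -1, C, 1+B, 0, 0, 0;
        2, 0, 1+B, 2+A, 0, 0, 0;
        0, 0, 0, 0, C-A, -1, 1;
        0, 0, 0, 0, -1, C, -1-B;
        0, 0, 0, 0, 1, -1-B, 2+A] : Matrix (Fin 7) (Fin 7) ℝ).det
    = (-4*C^2+12*B+4*B*C-2*B^2+2*B^2*C-18*A+6*A*C-4*A*C^2+6*A*B+2*A*B*C-3*A*B^2+A*B^2*C-9*A^2+3*A^2*C-A^2*C^2)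
      * (2*B-2*C-2*B*C+2*C^2-2*A*C+2*A*B+A*C^2-B^2*C+A*B^2-A^2*C) := by
  have hb : (!![1+A-C, A, 2, 2, 0, 0, 0;
        A, 2+A, -1, 0, 0, 0, 0;
        2, -1, C, 1+B, 0, 0, 0;
        2, 0, 1+B, 2+A, 0, 0, 0;
        0, 0, 0, 0, C-A, -1, 1;
        0, 0, 0, 0, -1, C, -1-B;
        0, 0, 0, 0, 1, -1-B, 2+A] : Matrix (Fin 7) (Fin 7) ℝ)
      = Matrix.reindex finSumFinEquiv finSumFinEquiv
          (Matrix.fromBlocks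
            (!![1+A-C, A, 2, 2; A, 2+A, -1, 0; 2, -1, C, 1+B; 2, 0, 1+B, 2+A] : Matrix (Fin 4) (Fin 4) ℝ)
            0 0
            (!![C-A, -1, 1; -1, C, -1-B; 1, -1-B, 2+A] : Matrix (Fin 3) (Fin 3) ℝ)) := by
    ext i j
    fin_cases i <;> fin_cases j <;> rfl
  have h4 : (!![1+A-C, A, 2, 2; A, 2+A, -1, 0; 2, -1, C, 1+B; 2, 0, 1+B, 2+A] : Matrix (Fin 4) (Fin 4) ℝ).det
      = -4*C^2+12*B+4*B*C-2*B^2+2*B^2*C-18*A+6*A*C-4*A*C^2+6*A*B+2*A*B*C-3*A*B^2+A*B^2*C-9*A^2+3*A^2*C-A^2*C^2 := by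
    simp [Matrix.det_succ_row_zero, Fin.sum_univ_succ, Fin.succAbove, Fin.castSucc,
      Fin.castAdd, Fin.castLE,
      Matrix.cons_val_zero, Matrix.cons_val_one, Matrix.head_cons, Matrix.vecHead, Matrix.vecTail]
    ring
  have h3 : (!![C-A, -1, 1; -1, C, -1-B; 1, -1-B, 2+A] : Matrix (Fin 3) (Fin 3) ℝ).det
      = 2*B-2*C-2*B*C+2*C^2-2*A*C+2*A*B+A*C^2-B^2*C+A*B^2-A^2*C := by
    simp [Matrix.det_fin_three]
    ring
  rw [hb, Matrix.det_reindex_self, Matrix.det_fromBlocks_zero₂₁, h4, h3]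

lemma abc_bounds (ε α γ : ℝ) (hε : 0 < ε) (hε100 : ε < 1/100)
    (hαabs : |α| < 1) (hαroot : 2 * ε * α ^ 2 + α + 2 * ε = 0)
    (hγabs : |γ| < 1) (hγroot : ε * γ ^ 2 + γ + ε = 0) :
    ((0:ℝ) < 1 - α^2 ∧ (0:ℝ) < 1 - α*γ ∧ (0:ℝ) < 1 - γ^2) ∧
    (4*ε^2 ≤ α^2/(1-α^2) ∧ α^2/(1-α^2) ≤ 5*ε^2) ∧
    (2*ε^2 ≤ α*γ/(1-α*γ) ∧ α*γ/(1-α*γ) ≤ 11/5*ε^2) ∧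
    (ε^2 ≤ γ^2/(1-γ^2) ∧ γ^2/(1-γ^2) ≤ 6/5*ε^2) := by
  have hεsq : ε^2 ≤ 1/10000 := by nlinarith
  have hα11 := abs_lt.mp hαabs
  have hγ11 := abs_lt.mp hγabs
  have hαe : α = -(2*ε)*(1+α^2) := by linarith
  have hγe : γ = -ε*(1+γ^2) := by linarith
  have hαneg : α < 0 := by nlinarith [sq_nonneg α]
  have hγneg : γ < 0 := by nlinarith [sq_nonneg γ]
  have hα4 : -α ≤ 4*ε := by nlinarith [hα11.1, hα11.2]
  have hγ2 : -γ ≤ 2*ε := by nlinarith [hγ11.1, hγ11.2]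
  have hα16 : α^2 ≤ 16*ε^2 := by nlinarith
  have hγ4sq : γ^2 ≤ 4*ε^2 := by nlinarith
  have hαlow : 2*ε ≤ -α := by nlinarith [sq_nonneg α]
  have hγlow : ε ≤ -γ := by nlinarith [sq_nonneg γ]
  have hα2low : 4*ε^2 ≤ α^2 := by nlinarith
  have hγ2low : ε^2 ≤ γ^2 := by nlinarith
  have hαsq : α^2 = 4*ε^2*(1+α^2)^2 := by
    conv_lhs => rw [hαe]
    ring
  have hγsq : γ^2 = ε^2*(1+γ^2)^2 := by
    conv_lhs => rw [hγe]
    ring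
  have hαγ : α*γ = 2*ε^2*(1+α^2)*(1+γ^2) := by
    conv_lhs => rw [hαe, hγe]
    ring
  have hα2up : α^2 ≤ 41/10*ε^2 := by nlinarith [sq_nonneg ε, sq_nonneg α, sq_nonneg (ε*α)]
  have hγ2up : γ^2 ≤ 11/10*ε^2 := by nlinarith [sq_nonneg ε, sq_nonneg γ, sq_nonneg (ε*γ)]
  have hαγlow : 2*ε^2 ≤ α*γ := by nlinarith [sq_nonneg α, sq_nonneg γ, sq_nonneg (α*γ), sq_nonneg ε]
  have hαγup : α*γ ≤ 21/10*ε^2 := by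
    nlinarith [sq_nonneg ε, sq_nonneg (ε*α), sq_nonneg (ε*γ), sq_nonneg (ε*α*γ), sq_nonneg (α*γ)]
  clear hαsq hγsq hαγ hαroot hγroot hαe hγe hαabs hγabs hα11 hγ11 hα4 hγ2 hαlow hγlow hα16 hγ4sq
  have hd1 : (0:ℝ) < 1 - α^2 := by nlinarith
  have hd2 : (0:ℝ) < 1 - α*γ := by nlinarith
  have hd3 : (0:ℝ) < 1 - γ^2 := by nlinarith
  refine ⟨⟨hd1, hd2, hd3⟩, ⟨?_, ?_⟩, ⟨?_, ?_⟩, ⟨?_, ?_⟩⟩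
  · rw [le_div_iff₀ hd1]
    nlinarith [sq_nonneg (ε*α)]
  · rw [div_le_iff₀ hd1]
    nlinarith [sq_nonneg (ε*α), sq_nonneg ε]
  · rw [le_div_iff₀ hd2]
    nlinarith [sq_nonneg ε, mul_nonneg (le_of_lt hε) (le_of_lt hε)]
  · rw [div_le_iff₀ hd2]
    nlinarith [sq_nonneg ε]
  · rw [le_div_iff₀ hd3]
    nlinarith [sq_nonneg (ε*γ)]
  · rw [div_le_iff₀ hd3]
    nlinarith [sq_nonneg ε]

lemma det_factors_neg (ε A B C : ℝ) (hε : 0 < ε) (hε100 : ε < 1/100)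
    (hA1 : 4*ε^2 ≤ A) (hA2 : A ≤ 5*ε^2)
    (hB1 : 2*ε^2 ≤ B) (hB2 : B ≤ 11/5*ε^2)
    (hC1 : ε^2 ≤ C) (hC2 : C ≤ 6/5*ε^2) :
    (-4*C^2+12*B+4*B*C-2*B^2+2*B^2*C-18*A+6*A*C-4*A*C^2+6*A*B+2*A*B*C-3*A*B^2+A*B^2*C-9*A^2+3*A^2*C-A^2*C^2)
      * (2*B-2*C-2*B*C+2*C^2-2*A*C+2*A*B+A*C^2-B^2*C+A*B^2-A^2*C) < 0 := by
  have hεsq : ε^2 ≤ 1/10000 := by nlinarith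
  have hε4 : 0 < ε^2 := by positivity
  have hA0 : 0 ≤ A := by nlinarith
  have hB0 : 0 ≤ B := by nlinarith
  have hC0 : 0 ≤ C := by nlinarith
  have hA1' : A ≤ 1 := by nlinarith
  have hB1' : B ≤ 1 := by nlinarith
  have hC1' : C ≤ 1 := by nlinarith
  have m1 : A*B ≤ 25*ε^4 := by nlinarith [mul_le_mul hA2 hB2 hB0 (by positivity : (0:ℝ) ≤ 5*ε^2)]
  have m2 : A*C ≤ 25*ε^4 := by nlinarith [mul_le_mul hA2 hC2 hC0 (by positivity : (0:ℝ) ≤ 5*ε^2)]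
  have m3 : B*C ≤ 25*ε^4 := by nlinarith [mul_le_mul hB2 hC2 hC0 (by positivity : (0:ℝ) ≤ 11/5*ε^2)]
  have m4 : A^2 ≤ 25*ε^4 := by nlinarith [mul_le_mul hA2 hA2 hA0 (by positivity : (0:ℝ) ≤ 5*ε^2)]
  have m5 : B^2 ≤ 25*ε^4 := by nlinarith [mul_le_mul hB2 hB2 hB0 (by positivity : (0:ℝ) ≤ 11/5*ε^2)]
  have m6 : C^2 ≤ 25*ε^4 := by nlinarith [mul_le_mul hC2 hC2 hC0 (by positivity : (0:ℝ) ≤ 6/5*ε^2)]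
  have n1 : 0 ≤ A*B := mul_nonneg hA0 hB0
  have n2 : 0 ≤ A*C := mul_nonneg hA0 hC0
  have n3 : 0 ≤ B*C := mul_nonneg hB0 hC0
  have n4 : 0 ≤ A^2 := sq_nonneg A
  have n5 : 0 ≤ B^2 := sq_nonneg B
  have n6 : 0 ≤ C^2 := sq_nonneg C
  have m7 : B^2*C ≤ 25*ε^4 := le_trans (mul_le_of_le_one_right n5 hC1') m5
  have n7 : 0 ≤ B^2*C := mul_nonneg n5 hC0
  have m8 : A*C^2 ≤ 25*ε^4 := by
    have h : A*C^2 = (A*C)*C := by ring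
    rw [h]; exact le_trans (mul_le_of_le_one_right n2 hC1') m2
  have n8 : 0 ≤ A*C^2 := mul_nonneg hA0 n6
  have m9 : A*B*C ≤ 25*ε^4 := le_trans (mul_le_of_le_one_right n1 hC1') m1
  have n9 : 0 ≤ A*B*C := mul_nonneg n1 hC0
  have m10 : A*B^2 ≤ 25*ε^4 := by
    have h : A*B^2 = (A*B)*B := by ring
    rw [h]; exact le_trans (mul_le_of_le_one_right n1 hB1') m1
  have n10 : 0 ≤ A*B^2 := mul_nonneg hA0 n5
  have m11 : A^2*C ≤ 25*ε^4 := le_trans (mul_le_of_le_one_right n4 hC1') m4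
  have n11 : 0 ≤ A^2*C := mul_nonneg n4 hC0
  have m12 : A*B^2*C ≤ 25*ε^4 := le_trans (mul_le_of_le_one_right n10 hC1') m10
  have n12 : 0 ≤ A*B^2*C := mul_nonneg n10 hC0
  have m13 : A^2*C^2 ≤ 25*ε^4 := by
    have h : A^2*C^2 = (A^2*C)*C := by ring
    rw [h]; exact le_trans (mul_le_of_le_one_right n11 hC1') m11
  have n13 : 0 ≤ A^2*C^2 := mul_nonneg n4 n6
  have hε4small : 25*ε^4 ≤ (25/10000)*ε^2 := by nlinarith [sq_nonneg ε, hε4]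
  have hf4 : (-4*C^2+12*B+4*B*C-2*B^2+2*B^2*C-18*A+6*A*C-4*A*C^2+6*A*B+2*A*B*C-3*A*B^2+A*B^2*C-9*A^2+3*A^2*C-A^2*C^2) < 0 := by
    nlinarith [hA1, hB2, hε4, m3, m7, m2, m1, m9, m12, m11, n6, n5, n8, n10, n4, n13, hε4small]
  have hf3 : (0:ℝ) < (2*B-2*C-2*B*C+2*C^2-2*A*C+2*A*B+A*C^2-B^2*C+A*B^2-A^2*C) := by
    nlinarith [hB1, hC2, hε4, m3, m2, m7, m11, n6, n1, n8, n10, hε4small]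
  exact mul_neg_of_neg_of_pos hf4 hf3

/-- for all small enough `ε > 0`, with `α, γ` the small roots of
`2εα² + α + 2ε = 0` and `εγ² + γ + ε = 0`, `X = diag(α,0,γ)` and `V = (1,1,1)`, the `7 × 7`
real matrix `( Re ∑_r Vᴴ (Xᴴ)^r A_j A₁⁻¹ A_s X^r V )_{j,s}` is invertible (each series
converging absolutely): the quadric `M ⊂ ℂ¹⁰` is `𝔇(a)`-nondegenerate at `0` for
`a = (ε,ε,0,…,0)`. -/
theorem quadric_Da_nondegenerate :
    ∃ ε₀ : ℝ, 0 < ε₀ ∧ ε₀ < 1 / 4 ∧ ∀ ε : ℝ, 0 < ε → ε < ε₀ →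
      ∀ α γ : ℝ, |α| < 1 → 2 * ε * α ^ 2 + α + 2 * ε = 0 →
        |γ| < 1 → ε * γ ^ 2 + γ + ε = 0 →
      (∀ j s : Fin 7, Summable (fun r : ℕ =>
        ‖star (![1, 1, 1] : Fin 3 → ℂ) ⬝ᵥ
          ((((Matrix.diagonal ![(α : ℂ), 0, (γ : ℂ)])ᴴ) ^ r * quadricA j *
              (quadricA 0)⁻¹ * quadricA s *
              (Matrix.diagonal ![(α : ℂ), 0, (γ : ℂ)]) ^ r).mulVec
            (![1, 1, 1] : Fin 3 → ℂ))‖)) ∧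
      IsUnit (Matrix.of fun j s : Fin 7 =>
        (∑' r : ℕ,
          star (![1, 1, 1] : Fin 3 → ℂ) ⬝ᵥ
            ((((Matrix.diagonal ![(α : ℂ), 0, (γ : ℂ)])ᴴ) ^ r * quadricA j *
                (quadricA 0)⁻¹ * quadricA s *
                (Matrix.diagonal ![(α : ℂ), 0, (γ : ℂ)]) ^ r).mulVec
              (![1, 1, 1] : Fin 3 → ℂ))).re) := by
  refine ⟨1/100, by norm_num, by norm_num, ?_⟩
  intro ε hε hε100 α γ hαabs hαroot hγabs hγroot
  obtain ⟨⟨hd1, hd2, hd3⟩, ⟨hA1, hA2⟩, ⟨hB1, hB2⟩, ⟨hC1, hC2⟩⟩ :=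
    abc_bounds ε α γ hε hε100 hαabs hαroot hγabs hγroot
  have h1' : 1 - α^2 ≠ 0 := ne_of_gt hd1
  have h2n : 1 - α*γ ≠ 0 := ne_of_gt hd2
  have h3' : 1 - γ^2 ≠ 0 := ne_of_gt hd3
  have h1n : 1 - α*α ≠ 0 := by rw [show α*α = α^2 by ring]; exact h1'
  have h3n : 1 - γ*γ ≠ 0 := by rw [show γ*γ = γ^2 by ring]; exact h3'
  have h2n' : 1 - γ*α ≠ 0 := by rw [mul_comm]; exact h2n
  refine ⟨fun j s => summable_term α γ hαabs hγabs j s, ?_⟩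
  have hM : (Matrix.of fun j s : Fin 7 =>
        (∑' r : ℕ,
          star (![1, 1, 1] : Fin 3 → ℂ) ⬝ᵥ
            ((((Matrix.diagonal ![(α : ℂ), 0, (γ : ℂ)])ᴴ) ^ r * quadricA j *
                (quadricA 0)⁻¹ * quadricA s *
                (Matrix.diagonal ![(α : ℂ), 0, (γ : ℂ)]) ^ r).mulVec
              (![1, 1, 1] : Fin 3 → ℂ))).re)
      = !![1+(α^2/(1-α^2))-(γ^2/(1-γ^2)), (α^2/(1-α^2)), 2, 2, 0, 0, 0;
        (α^2/(1-α^2)), 2+(α^2/(1-α^2)), -1, 0, 0, 0, 0;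
        2, -1, (γ^2/(1-γ^2)), 1+(α*γ/(1-α*γ)), 0, 0, 0;
        2, 0, 1+(α*γ/(1-α*γ)), 2+(α^2/(1-α^2)), 0, 0, 0;
        0, 0, 0, 0, (γ^2/(1-γ^2))-(α^2/(1-α^2)), -1, 1;
        0, 0, 0, 0, -1, (γ^2/(1-γ^2)), -1-(α*γ/(1-α*γ));
        0, 0, 0, 0, 1, -1-(α*γ/(1-α*γ)), 2+(α^2/(1-α^2))] := by
    ext j s
    rw [Matrix.of_apply, tsum_term α γ hαabs hγabs j s]
    exact entries_eq α γ h1n h2n h3n h1' h3' h2n' j s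
  rw [hM, Matrix.isUnit_iff_isUnit_det,
    det_block (α^2/(1-α^2)) (α*γ/(1-α*γ)) (γ^2/(1-γ^2))]
  exact isUnit_iff_ne_zero.mpr (ne_of_lt
    (det_factors_neg ε (α^2/(1-α^2)) (α*γ/(1-α*γ)) (γ^2/(1-γ^2))
      hε hε100 hA1 hA2 hB1 hB2 hC1 hC2))
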